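/- Let g be holomorphic on the unit disc. For every m ∈ ℕ₀ and every holomorphic f on the disc with f(0) = 0, T_g S_g^m f = (S_g − T_g)^m T_g f. -/

import Mathlib

open MeasureTheory Metric

/-- The analytic paraproduct `T_g f (z) = ∫₀^z f(ζ) g'(ζ) dζ`, realized by
integrating along the segment from `0` to `z`. -/
noncomputable def Tg (g f : ℂ → ℂ) : ℂ → ℂ :=
  fun z => z * ∫ t in (0:ℝ)..1, f ((t : ℂ) * z) * deriv g ((t : ℂ) * z)

/-- The analytic paraproduct `S_g f (z) = ∫₀^z f'(ζ) g(ζ) dζ`, realized by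
integrating along the segment from `0` to `z`. -/
noncomputable def Sg (g f : ℂ → ℂ) : ℂ → ℂ :=
  fun z => z * ∫ t in (0:ℝ)..1, deriv f ((t : ℂ) * z) * g ((t : ℂ) * z)

/-- The multiplication operator `M_g f = g f`. -/
def Mg (g f : ℂ → ℂ) : ℂ → ℂ := fun z => g z * f z


noncomputable def P (u : ℂ → ℂ) : ℂ → ℂ :=
  fun z => z * ∫ t in (0:ℝ)..1, u ((t : ℂ) * z)

lemma mem_ball_smul {z : ℂ} (hz : z ∈ ball (0:ℂ) 1) {t : ℝ} (ht0 : 0 ≤ t) (ht1 : t ≤ 1) :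
    (t : ℂ) * z ∈ ball (0:ℂ) 1 := by
  simp only [mem_ball, dist_zero_right] at hz ⊢
  calc ‖(t:ℂ) * z‖ = t * ‖z‖ := by
        rw [norm_mul, Complex.norm_real, Real.norm_of_nonneg ht0]
    _ ≤ 1 * ‖z‖ := by nlinarith [norm_nonneg z]
    _ < 1 := by simpa using hz

lemma hasDerivAt_P {u : ℂ → ℂ} (hu : DifferentiableOn ℂ u (ball 0 1)) {z₀ : ℂ}
    (hz₀ : z₀ ∈ ball (0:ℂ) 1) : HasDerivAt (P u) (u z₀) z₀ := by
  have hz₀1 : ‖z₀‖ < 1 := by simpa [mem_ball, dist_zero_right] using hz₀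
  have hua : AnalyticOnNhd ℂ u (ball 0 1) := hu.analyticOnNhd isOpen_ball
  have hu' : DifferentiableOn ℂ (deriv u) (ball 0 1) := hua.deriv.differentiableOn
  have hcu : ContinuousOn u (ball 0 1) := hu.continuousOn
  have hcu' : ContinuousOn (deriv u) (ball 0 1) := hu'.continuousOn
  set r : ℝ := (1 + ‖z₀‖) / 2 with hr
  set ε : ℝ := (1 - ‖z₀‖) / 2 with hε
  have hεpos : 0 < ε := by rw [hε]; linarith
  have hr1 : r < 1 := by rw [hr]; linarith
  have hr0 : 0 < r := by rw [hr]; positivity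
  have hrb : closedBall (0:ℂ) r ⊆ ball 0 1 := closedBall_subset_ball hr1
  obtain ⟨C₁, hC₁⟩ := (isCompact_closedBall (0:ℂ) r).exists_bound_of_continuousOn (hcu.mono hrb)
  obtain ⟨C₂, hC₂⟩ := (isCompact_closedBall (0:ℂ) r).exists_bound_of_continuousOn (hcu'.mono hrb)
  have hC₂0 : 0 ≤ C₂ := le_trans (norm_nonneg _) (hC₂ 0 (mem_closedBall_self hr0.le))
  -- membership facts
  have hmem : ∀ x ∈ ball z₀ ε, ∀ t : ℝ, 0 ≤ t → t ≤ 1 → (t:ℂ) * x ∈ closedBall (0:ℂ) r := by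
    intro x hx t ht0 ht1
    have hxn : ‖x‖ ≤ r := by
      have := mem_ball_iff_norm.mp hx
      have : ‖x‖ < ‖z₀‖ + ε := by
        calc ‖x‖ = ‖x - z₀ + z₀‖ := by ring_nf
          _ ≤ ‖x - z₀‖ + ‖z₀‖ := norm_add_le _ _
          _ < ε + ‖z₀‖ := by linarith [mem_ball_iff_norm.mp hx]
          _ = ‖z₀‖ + ε := by ring
      rw [hr]; rw [hε] at this; linarith
    simp only [mem_closedBall, dist_zero_right]
    calc ‖(t:ℂ) * x‖ = t * ‖x‖ := by rw [norm_mul, Complex.norm_real, Real.norm_of_nonneg ht0]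
      _ ≤ 1 * r := by nlinarith [norm_nonneg x]
      _ = r := one_mul r
  have hmemb : ∀ x ∈ ball z₀ ε, ∀ t : ℝ, 0 ≤ t → t ≤ 1 → (t:ℂ) * x ∈ ball (0:ℂ) 1 :=
    fun x hx t ht0 ht1 => hrb (hmem x hx t ht0 ht1)
  set F : ℂ → ℝ → ℂ := fun x t => x * u ((t:ℂ) * x) with hF
  set F' : ℂ → ℝ → ℂ := fun x t => u ((t:ℂ) * x) + x * (deriv u ((t:ℂ) * x) * (t:ℂ)) with hF'
  have hz₀self : z₀ ∈ ball z₀ ε := mem_ball_self hεpos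
  have cont_t : ∀ x ∈ ball z₀ ε, ContinuousOn (fun t : ℝ => (t:ℂ) * x) Set.univ :=
    fun x _ => (Complex.continuous_ofReal.mul continuous_const).continuousOn
  -- main derivative via dominated convergence
  have main := intervalIntegral.hasDerivAt_integral_of_dominated_loc_of_deriv_le
    (𝕜 := ℂ) (μ := volume) (a := (0:ℝ)) (b := 1) (F := F) (F' := F')
    (x₀ := z₀) (bound := fun _ => C₁ + r * C₂) (ball_mem_nhds z₀ hεpos)
    (Filter.eventually_of_mem (isOpen_ball.mem_nhds hz₀self) (fun x hx => by
      apply ContinuousOn.aestronglyMeasurable ?_ measurableSet_uIoc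
      rw [Set.uIoc_of_le (zero_le_one' ℝ)]
      exact (continuousOn_const.mul (hcu.comp
        ((Complex.continuous_ofReal.mul continuous_const).continuousOn)
        (fun t ht => hmemb x hx t ht.1.le ht.2)))))
    (by
      apply ContinuousOn.intervalIntegrable
      rw [Set.uIcc_of_le (zero_le_one' ℝ)]
      exact continuousOn_const.mul (hcu.comp
        ((Complex.continuous_ofReal.mul continuous_const).continuousOn)
        (fun t ht => hmemb z₀ hz₀self t ht.1 ht.2)))
    (by
      apply ContinuousOn.aestronglyMeasurable ?_ measurableSet_uIoc
      rw [Set.uIoc_of_le (zero_le_one' ℝ)]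
      have hmaps : Set.MapsTo (fun t : ℝ => (t:ℂ) * z₀) (Set.Ioc (0:ℝ) 1) (ball (0:ℂ) 1) :=
        fun t ht => hmemb z₀ hz₀self t ht.1.le ht.2
      exact (hcu.comp ((Complex.continuous_ofReal.mul continuous_const).continuousOn) hmaps).add
        (continuousOn_const.mul ((hcu'.comp
          ((Complex.continuous_ofReal.mul continuous_const).continuousOn) hmaps).mul
          Complex.continuous_ofReal.continuousOn)))
    (Filter.Eventually.of_forall (fun t ht x hx => by
      rw [Set.uIoc_of_le (zero_le_one' ℝ)] at ht
      have hm := hmem x hx t ht.1.le ht.2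
      have hxr : ‖x‖ ≤ r := by
        have h1 : ‖(1:ℝ) * x‖ ≤ r := by
          simpa [mem_closedBall, dist_zero_right] using hmem x hx 1 zero_le_one le_rfl
        simpa using h1
      calc ‖F' x t‖ ≤ ‖u ((t:ℂ)*x)‖ + ‖x * (deriv u ((t:ℂ)*x) * (t:ℂ))‖ := norm_add_le _ _
        _ ≤ C₁ + ‖x‖ * (‖deriv u ((t:ℂ)*x)‖ * ‖(t:ℂ)‖) := by
            rw [norm_mul, norm_mul]
            exact add_le_add (hC₁ _ hm) le_rfl
        _ ≤ C₁ + r * C₂ := by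
            have htle : ‖(t:ℂ)‖ ≤ 1 := by
              rw [Complex.norm_real, Real.norm_of_nonneg ht.1.le]; exact ht.2
            have := hC₂ _ hm
            have h0 : (0:ℝ) ≤ ‖deriv u ((t:ℂ)*x)‖ := norm_nonneg _
            have h4 : ‖deriv u ((t:ℂ)*x)‖ * ‖(t:ℂ)‖ ≤ C₂ := by
              nlinarith [norm_nonneg ((t:ℂ))]
            have h5 : ‖x‖ * (‖deriv u ((t:ℂ)*x)‖ * ‖(t:ℂ)‖) ≤ r * C₂ :=
              mul_le_mul hxr h4 (by positivity) hr0.le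
            linarith))
    intervalIntegrable_const
    (Filter.Eventually.of_forall (fun t ht x hx => by
      rw [Set.uIoc_of_le (zero_le_one' ℝ)] at ht
      have hmb : (t:ℂ) * x ∈ ball (0:ℂ) 1 := hmemb x hx t ht.1.le ht.2
      have h1 : HasDerivAt (fun y : ℂ => (t:ℂ) * y) (t:ℂ) x := by
        simpa using (hasDerivAt_id x).const_mul (t:ℂ)
      have h2 : HasDerivAt u (deriv u ((t:ℂ) * x)) ((t:ℂ) * x) :=
        (hu.differentiableAt (isOpen_ball.mem_nhds hmb)).hasDerivAt
      have h3 : HasDerivAt (fun y : ℂ => u ((t:ℂ) * y)) (deriv u ((t:ℂ) * x) * (t:ℂ)) x :=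
        h2.comp x h1
      have := (hasDerivAt_id x).mul h3
      simpa [hF', Pi.mul_def] using this))
  obtain ⟨hint, hder⟩ := main
  have hPeq : P u = fun x => ∫ t in (0:ℝ)..1, F x t := by
    funext x
    simp only [P, hF]
    rw [intervalIntegral.integral_const_mul]
  rw [hPeq]
  -- compute the integral of F' z₀ via FTC
  have hFTC : (∫ t in (0:ℝ)..1, F' z₀ t) = u z₀ := by
    have hψ : ∀ t ∈ Set.uIcc (0:ℝ) 1, HasDerivAt (fun s : ℝ => (s:ℂ) * u ((s:ℂ) * z₀))
        (F' z₀ t) t := by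
      intro t ht
      rw [Set.uIcc_of_le (zero_le_one' ℝ)] at ht
      have hmb : (t:ℂ) * z₀ ∈ ball (0:ℂ) 1 := hmemb z₀ hz₀self t ht.1 ht.2
      have hc : HasDerivAt (fun w : ℂ => w * u (w * z₀))
          (u ((t:ℂ) * z₀) + (t:ℂ) * (deriv u ((t:ℂ) * z₀) * z₀)) ((t:ℂ)) := by
        have h1 : HasDerivAt (fun w : ℂ => w * z₀) z₀ ((t:ℂ)) := by
          simpa using (hasDerivAt_id ((t:ℂ))).mul_const z₀
        have h2 : HasDerivAt u (deriv u ((t:ℂ) * z₀)) ((t:ℂ) * z₀) :=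
          (hu.differentiableAt (isOpen_ball.mem_nhds hmb)).hasDerivAt
        have h3 := (hasDerivAt_id ((t:ℂ))).mul (h2.comp ((t:ℂ)) h1)
        simpa [Pi.mul_def, Function.comp_def] using h3
      have := hc.comp_ofReal
      simp only [hF']
      convert this using 1
      ring
    rw [intervalIntegral.integral_eq_sub_of_hasDerivAt hψ hint]
    simp
  rw [hFTC] at hder
  exact hder


namespace StmtAux

open MeasureTheory Metric

variable {g f u v h : ℂ → ℂ}

/-- `Tg` as primitive operator. -/
lemma Tg_eq_P (g f : ℂ → ℂ) : Tg g f = P (fun w => f w * deriv g w) := rfl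

lemma Sg_eq_P (g f : ℂ → ℂ) : Sg g f = P (fun w => deriv f w * g w) := rfl

lemma Tg_zero (g f : ℂ → ℂ) : Tg g f 0 = 0 := by simp [Tg]

lemma Sg_zero (g f : ℂ → ℂ) : Sg g f 0 = 0 := by simp [Sg]

lemma deriv_diff (hg : DifferentiableOn ℂ g (ball 0 1)) :
    DifferentiableOn ℂ (deriv g) (ball 0 1) :=
  ((hg.analyticOnNhd isOpen_ball).deriv).differentiableOn

lemma hasDerivAt_Tg (hg : DifferentiableOn ℂ g (ball 0 1))
    (hf : DifferentiableOn ℂ f (ball 0 1)) :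
    ∀ z ∈ ball (0:ℂ) 1, HasDerivAt (Tg g f) (f z * deriv g z) z := by
  intro z hz
  rw [Tg_eq_P]
  exact hasDerivAt_P (hf.mul (deriv_diff hg)) hz

lemma hasDerivAt_Sg (hg : DifferentiableOn ℂ g (ball 0 1))
    (hf : DifferentiableOn ℂ f (ball 0 1)) :
    ∀ z ∈ ball (0:ℂ) 1, HasDerivAt (Sg g f) (deriv f z * g z) z := by
  intro z hz
  rw [Sg_eq_P]
  exact hasDerivAt_P ((deriv_diff hf).mul hg) hz

lemma diff_Tg (hg : DifferentiableOn ℂ g (ball 0 1))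
    (hf : DifferentiableOn ℂ f (ball 0 1)) :
    DifferentiableOn ℂ (Tg g f) (ball 0 1) :=
  fun z hz => (hasDerivAt_Tg hg hf z hz).differentiableAt.differentiableWithinAt

lemma diff_Sg (hg : DifferentiableOn ℂ g (ball 0 1))
    (hf : DifferentiableOn ℂ f (ball 0 1)) :
    DifferentiableOn ℂ (Sg g f) (ball 0 1) :=
  fun z hz => (hasDerivAt_Sg hg hf z hz).differentiableAt.differentiableWithinAt

/-- Uniqueness of primitives on the (convex) unit ball. -/
lemma eqOn_ball {u v w : ℂ → ℂ} (hu : ∀ z ∈ ball (0:ℂ) 1, HasDerivAt u (w z) z)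
    (hv : ∀ z ∈ ball (0:ℂ) 1, HasDerivAt v (w z) z) (h0 : u 0 = v 0) :
    Set.EqOn u v (ball (0:ℂ) 1) := by
  have h01 : (0:ℂ) ∈ ball (0:ℂ) 1 := mem_ball_self one_pos
  refine (convex_ball (0:ℂ) 1).eqOn_of_fderivWithin_eq
    (fun z hz => (hu z hz).differentiableAt.differentiableWithinAt)
    (fun z hz => (hv z hz).differentiableAt.differentiableWithinAt)
    (isOpen_ball.uniqueDiffOn) (fun z hz => ?_) h01 h0
  rw [fderivWithin_of_isOpen isOpen_ball hz, fderivWithin_of_isOpen isOpen_ball hz,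
    (hu z hz).hasFDerivAt.fderiv, (hv z hz).hasFDerivAt.fderiv]

/-- Congruence: `Tg` only depends on values on the ball. -/
lemma Tg_congr (hw : Set.EqOn u v (ball (0:ℂ) 1)) {z : ℂ} (hz : z ∈ ball (0:ℂ) 1) :
    Tg g u z = Tg g v z := by
  unfold Tg
  congr 1
  refine intervalIntegral.integral_congr (fun t ht => ?_)
  rw [Set.uIcc_of_le (zero_le_one' ℝ)] at ht
  rw [hw (mem_ball_smul hz ht.1 ht.2)]

lemma Sg_congr (hw : Set.EqOn u v (ball (0:ℂ) 1)) {z : ℂ} (hz : z ∈ ball (0:ℂ) 1) :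
    Sg g u z = Sg g v z := by
  unfold Sg
  congr 1
  refine intervalIntegral.integral_congr (fun t ht => ?_)
  rw [Set.uIcc_of_le (zero_le_one' ℝ)] at ht
  have hmb : (t:ℂ) * z ∈ ball (0:ℂ) 1 := mem_ball_smul hz ht.1 ht.2
  have : u =ᶠ[nhds ((t:ℂ) * z)] v :=
    Filter.eventuallyEq_of_mem (isOpen_ball.mem_nhds hmb) hw
  rw [this.deriv_eq]

/-- `Tg` is additive w.r.t. subtraction, given continuity of the arguments. -/
lemma Tg_sub (hg : DifferentiableOn ℂ g (ball 0 1))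
    (hu : ContinuousOn u (ball 0 1)) (hv : ContinuousOn v (ball 0 1))
    {z : ℂ} (hz : z ∈ ball (0:ℂ) 1) :
    Tg g (u - v) z = Tg g u z - Tg g v z := by
  have hg' : ContinuousOn (deriv g) (ball 0 1) := (deriv_diff hg).continuousOn
  have hmaps : Set.MapsTo (fun t : ℝ => (t:ℂ) * z) (Set.uIcc (0:ℝ) 1) (ball (0:ℂ) 1) := by
    intro t ht
    rw [Set.uIcc_of_le (zero_le_one' ℝ)] at ht
    exact mem_ball_smul hz ht.1 ht.2
  have hct : ContinuousOn (fun t : ℝ => (t:ℂ) * z) (Set.uIcc (0:ℝ) 1) :=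
    (Complex.continuous_ofReal.mul continuous_const).continuousOn
  have hiu : IntervalIntegrable (fun t : ℝ => u ((t:ℂ)*z) * deriv g ((t:ℂ)*z)) volume 0 1 :=
    ((hu.comp hct hmaps).mul (hg'.comp hct hmaps)).intervalIntegrable
  have hiv : IntervalIntegrable (fun t : ℝ => v ((t:ℂ)*z) * deriv g ((t:ℂ)*z)) volume 0 1 :=
    ((hv.comp hct hmaps).mul (hg'.comp hct hmaps)).intervalIntegrable
  unfold Tg
  rw [← mul_sub]
  congr 1
  rw [← intervalIntegral.integral_sub hiu hiv]
  refine intervalIntegral.integral_congr (fun t ht => ?_)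
  simp [sub_mul]

/-- Integration by parts: `S_g h + T_g h = g·h` on the ball, when `h 0 = 0`. -/
lemma Sg_add_Tg (hg : DifferentiableOn ℂ g (ball 0 1))
    (hh : DifferentiableOn ℂ h (ball 0 1)) (hh0 : h 0 = 0) :
    Set.EqOn (fun z => Sg g h z + Tg g h z) (fun z => g z * h z) (ball (0:ℂ) 1) := by
  refine eqOn_ball (w := fun z => deriv h z * g z + h z * deriv g z)
    (fun z hz => (hasDerivAt_Sg hg hh z hz).add (hasDerivAt_Tg hg hh z hz))
    (fun z hz => ?_) (by simp [Sg_zero, Tg_zero, hh0])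
  have h1 : HasDerivAt g (deriv g z) z :=
    (hg.differentiableAt (isOpen_ball.mem_nhds hz)).hasDerivAt
  have h2 : HasDerivAt h (deriv h z) z :=
    (hh.differentiableAt (isOpen_ball.mem_nhds hz)).hasDerivAt
  have := h1.mul h2
  exact this.congr_deriv (by ring)

/-- Commutation: `T_g (g·h) = g·T_g h − T_g T_g h` on the ball. -/
lemma Tg_mul (hg : DifferentiableOn ℂ g (ball 0 1))
    (hh : DifferentiableOn ℂ h (ball 0 1)) :
    Set.EqOn (Tg g (fun w => g w * h w))
      (fun z => g z * Tg g h z - Tg g (Tg g h) z) (ball (0:ℂ) 1) := by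
  refine eqOn_ball (w := fun z => g z * h z * deriv g z)
    (hasDerivAt_Tg hg (hg.mul hh))
    (fun z hz => ?_) (by simp [Tg_zero])
  have h1 : HasDerivAt g (deriv g z) z :=
    (hg.differentiableAt (isOpen_ball.mem_nhds hz)).hasDerivAt
  have h2 := h1.mul (hasDerivAt_Tg hg hh z hz)
  have h3 := hasDerivAt_Tg hg (diff_Tg hg hh) z hz
  have := h2.sub h3
  exact this.congr_deriv (by ring)

/-- The key step: `T_g S_g h = (S_g − T_g) T_g h` on the ball. -/
lemma key_step (hg : DifferentiableOn ℂ g (ball 0 1))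
    (hh : DifferentiableOn ℂ h (ball 0 1)) (hh0 : h 0 = 0) {z : ℂ}
    (hz : z ∈ ball (0:ℂ) 1) :
    Tg g (Sg g h) z = Sg g (Tg g h) z - Tg g (Tg g h) z := by
  have hTgh := diff_Tg hg hh
  have hSgEq : Set.EqOn (Sg g h) ((fun w => g w * h w) - Tg g h) (ball (0:ℂ) 1) := by
    intro w hw
    have := Sg_add_Tg hg hh hh0 hw
    simp only at this ⊢
    simp only [Pi.sub_apply]
    linear_combination this
  have e1 : Tg g (Sg g h) z = Tg g ((fun w => g w * h w) - Tg g h) z := Tg_congr hSgEq hz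
  have e2 : Tg g ((fun w => g w * h w) - Tg g h) z
      = Tg g (fun w => g w * h w) z - Tg g (Tg g h) z :=
    Tg_sub hg (hg.continuousOn.mul hh.continuousOn) hTgh.continuousOn hz
  have e3 := Tg_mul hg hh hz
  have e4 := Sg_add_Tg hg hTgh (Tg_zero g h) hz
  simp only at e3 e4
  rw [e1, e2, e3]
  linear_combination -e4

end StmtAux

/-- For `f` holomorphic with `f 0 = 0`, `T_g S_g^m f = (S_g − T_g)^m T_g f`. -/
theorem stmt_5 (g f : ℂ → ℂ) (hg : DifferentiableOn ℂ g (Metric.ball 0 1))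
    (hf : DifferentiableOn ℂ f (Metric.ball 0 1)) (hf0 : f 0 = 0) (m : ℕ) :
    ∀ z ∈ Metric.ball (0:ℂ) 1,
      Tg g ((Sg g)^[m] f) z = (fun h => Sg g h - Tg g h)^[m] (Tg g f) z := by
  classical
  have hiter : ∀ k : ℕ, DifferentiableOn ℂ ((Sg g)^[k] f) (Metric.ball 0 1)
      ∧ ((Sg g)^[k] f) 0 = 0 := by
    intro k
    induction k with
    | zero => exact ⟨hf, hf0⟩
    | succ k ih =>
      rw [Function.iterate_succ_apply']
      exact ⟨StmtAux.diff_Sg hg ih.1, StmtAux.Sg_zero g _⟩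
  induction m with
  | zero => intro z hz; simp
  | succ m ih =>
    intro z hz
    rw [Function.iterate_succ_apply', Function.iterate_succ_apply']
    set h := (Sg g)^[m] f with hh
    have hhd := (hiter m).1
    have hh0 := (hiter m).2
    have key := StmtAux.key_step hg hhd hh0 hz
    have hEq : Set.EqOn (Tg g h) ((fun h => Sg g h - Tg g h)^[m] (Tg g f))
        (Metric.ball (0:ℂ) 1) := fun w hw => ih w hw
    have e1 : Sg g (Tg g h) z = Sg g ((fun h => Sg g h - Tg g h)^[m] (Tg g f)) z :=
      StmtAux.Sg_congr hEq hz
    have e2 : Tg g (Tg g h) z = Tg g ((fun h => Sg g h - Tg g h)^[m] (Tg g f)) z :=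
      StmtAux.Tg_congr hEq hz
    simp only [Pi.sub_apply]
    rw [key, e1, e2]
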